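/- arXiv:1211.3732 — 4 statements merged into one kernel-verified Lean document; each statement's English description precedes it below -/
import Mathlib

section
/- Let d, m ≥ 1 be integers, δ̂ ∈ (0,1], K₀ ≥ 0, H̄ ≥ 0, K > 0, T > 0, and let l₁,…,l_m ∈ ℤ^d satisfy l_k = e_k for k = 1,…,d and {l₁,…,l_m} = {−l₁,…,−l_m}. Let cH : ℝ^{d+1} × ℝ^m × ℝ × ℝ^d → ℝ satisfy: (i) for all u' ∈ ℝ^{d+1}, (t,x), and z, z̃ ∈ ℝ^m there exists a ∈ [δ̂, δ̂⁻¹]^m with cH(u', z, t, x) − cH(u', z̃, t, x) = Σ_{k=1}^m a_k (z_k − z̃_k); (ii) |cH(u', 0, t, x)| ≤ K₀|u'| + H̄ for all u', t, x. Define 𝒫(z) = max over a ∈ [δ̂/2, 2δ̂⁻¹]^m of Σ_k a_k z_k, and for v : [0,T] × ℝ^d → ℝ set F_h[v](t,x) = max( cH( (v(t,x), δ_{h,e_1}v(t,x),…,δ_{h,e_d}v(t,x)), (Δ_{h,l_1}v(t,x),…,Δ_{h,l_m}v(t,x)), t, x ), 𝒫(Δ_{h,l_1}v(t,x),…,Δ_{h,l_m}v(t,x))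 − K ). Then there exist h₀ > 0 depending only on d, m, δ̂, K₀ and max_k‖l_k‖, and N depending only on d and K₀, such that for every h ∈ (0, h₀], every bounded g : ℝ^d → ℝ, and every bounded v : [0,T] × ℝ^d → ℝ satisfying v(t,x) = g(x) + ∫_t^T F_h[v](r, x) dr for all (t,x) ∈ [0,T] × ℝ^d (with the integrand integrable in r), one has |v(t,x)| ≤ N e^{NT} (H̄ + K + sup|g|) for all (t,x) ∈ [0,T] × ℝ^d. -/
open scoped BigOperators
open MeasureTheory

noncomputable section

/-- First-order finite difference `δ_{h,l}φ(x) = h⁻¹(φ(x+hl) − φ(x))`. -/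
def deltaOp (d : ℕ) (h : ℝ) (l : Fin d → ℝ)
    (φ : (Fin d → ℝ) → ℝ) (x : Fin d → ℝ) : ℝ :=
  (φ (x + h • l) - φ x) / h

/-- Second-order finite difference
`Δ_{h,l}φ(x) = h⁻²(φ(x+hl) − 2φ(x) + φ(x−hl))`. -/
def DeltaOp (d : ℕ) (h : ℝ) (l : Fin d → ℝ)
    (φ : (Fin d → ℝ) → ℝ) (x : Fin d → ℝ) : ℝ :=
  (φ (x + h • l) - 2 * φ x + φ (x - h • l)) / h ^ 2

/-- `𝒫(z) = max over (a₁,…,a_m) ∈ [δ̂/2, 2δ̂⁻¹]^m of Σ_k a_k z_k`. -/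
def Pcal (m : ℕ) (δhat : ℝ) (z : Fin m → ℝ) : ℝ :=
  sSup {s : ℝ | ∃ a : Fin m → ℝ,
    (∀ k, δhat / 2 ≤ a k ∧ a k ≤ 2 * δhat⁻¹) ∧ s = ∑ k, a k * z k}

/-- Euclidean norm of a vector. -/
def eunorm {n : ℕ} (u : Fin n → ℝ) : ℝ :=
  Real.sqrt (∑ i, u i ^ 2)

lemma aux_eunorm {n : ℕ} (u : Fin n → ℝ) : eunorm u ≤ ∑ i, |u i| := by
  have hS : 0 ≤ ∑ i, |u i| := Finset.sum_nonneg fun i _ => abs_nonneg _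
  have h1 : ∑ i, u i ^ 2 ≤ (∑ i, |u i|) ^ 2 := by
    have : ∀ i ∈ Finset.univ, u i ^ 2 ≤ |u i| * ∑ j, |u j| := by
      intro i _
      have h2 : |u i| ≤ ∑ j, |u j| :=
        Finset.single_le_sum (fun j _ => abs_nonneg (u j)) (Finset.mem_univ i)
      calc u i ^ 2 = |u i| * |u i| := by rw [abs_mul_abs_self]; ring
        _ ≤ |u i| * ∑ j, |u j| := mul_le_mul_of_nonneg_left h2 (abs_nonneg _)
    calc ∑ i, u i ^ 2 ≤ ∑ i, |u i| * ∑ j, |u j| := Finset.sum_le_sum this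
      _ = (∑ i, |u i|) ^ 2 := by rw [← Finset.sum_mul]; ring
  calc eunorm u ≤ Real.sqrt ((∑ i, |u i|) ^ 2) := Real.sqrt_le_sqrt h1
    _ = ∑ i, |u i| := Real.sqrt_sq hS

lemma aux_exp (s : ℝ) (hs : 0 ≤ s) : s - s ^ 2 ≤ 1 - Real.exp (-s) := by
  have h1 : s + 1 ≤ Real.exp s := Real.add_one_le_exp s
  have h3 : 0 < Real.exp (-s) := Real.exp_pos _
  have h4 : Real.exp s * Real.exp (-s) = 1 := by
    rw [← Real.exp_add]; simp
  nlinarith [mul_le_mul_of_nonneg_right h1 h3.le, mul_nonneg hs hs]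


set_option maxHeartbeats 2000000 in
/-- Corollary 6.2 of Krylov, "An ersatz existence theorem for fully nonlinear
parabolic equations without convexity assumptions": a uniform bound on the
bounded solution of the finite-difference scheme
`∂_t v + max(H_h[v], P_h[v] − K) = 0` on `[0,T] × ℝ^d` with terminal data `g`. -/
theorem finite_difference_scheme_bound
    (d m : ℕ) (hd : 1 ≤ d) (hm : 1 ≤ m) (K₀ : ℝ) (hK₀ : 0 ≤ K₀) :
    ∃ N : ℝ, 0 < N ∧
    ∀ (δhat : ℝ), δhat ∈ Set.Ioc (0:ℝ) 1 →
    ∀ (hdm : d ≤ m) (l : Fin m → Fin d → ℤ),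
      (∀ i : Fin d, l (Fin.castLE hdm i) = fun j => if j = i then (1:ℤ) else 0) →
      (∀ k : Fin m, ∃ k' : Fin m, l k' = -l k) →
    ∃ h₀ : ℝ, 0 < h₀ ∧
    ∀ (Hbar K T : ℝ), 0 ≤ Hbar → 0 < K → 0 < T →
    ∀ (cH : (Fin (d + 1) → ℝ) → (Fin m → ℝ) → ℝ → (Fin d → ℝ) → ℝ),
      -- (i) increments of `cH` in `z` are given by coefficients in `[δ̂, δ̂⁻¹]^m`
      (∀ (u' : Fin (d + 1) → ℝ) (t : ℝ) (x : Fin d → ℝ) (z ztilde : Fin m → ℝ),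
        ∃ a : Fin m → ℝ, (∀ k, δhat ≤ a k ∧ a k ≤ δhat⁻¹) ∧
          cH u' z t x - cH u' ztilde t x = ∑ k, a k * (z k - ztilde k)) →
      -- (ii) `|cH(u',0,t,x)| ≤ K₀|u'| + H̄`
      (∀ (u' : Fin (d + 1) → ℝ) (t : ℝ) (x : Fin d → ℝ),
        |cH u' 0 t x| ≤ K₀ * eunorm u' + Hbar) →
    ∀ (g : (Fin d → ℝ) → ℝ) (Cg : ℝ), (∀ x, |g x| ≤ Cg) →
    ∀ (h : ℝ), h ∈ Set.Ioc 0 h₀ →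
    ∀ (v : ℝ → (Fin d → ℝ) → ℝ) (Fh : ℝ → (Fin d → ℝ) → ℝ),
      -- `Fh = F_h[v](t,x) = max(H_h[v](t,x), P_h[v](t,x) − K)`
      (∀ (t : ℝ) (x : Fin d → ℝ), Fh t x =
        max (cH
            (Fin.cons (v t x) (fun k : Fin d =>
              deltaOp d h (fun j => if j = k then (1:ℝ) else 0) (fun y => v t y) x))
            (fun k : Fin m => DeltaOp d h (fun i => ((l k i : ℝ))) (fun y => v t y) x) t x)
          (Pcal m δhat
            (fun k : Fin m => DeltaOp d h (fun i => ((l k i : ℝ))) (fun y => v t y) x) - K)) →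
      -- `v` is bounded on `[0,T] × ℝ^d`
      (∃ Mv : ℝ, ∀ t ∈ Set.Icc (0:ℝ) T, ∀ x : Fin d → ℝ, |v t x| ≤ Mv) →
      -- `v(t,x) = g(x) + ∫_t^T F_h[v](r,x) dr`, the integrand being integrable
      (∀ t ∈ Set.Icc (0:ℝ) T, ∀ x : Fin d → ℝ,
        IntervalIntegrable (fun r => Fh r x) volume t T ∧
        v t x = g x + ∫ r in t..T, Fh r x) →
    ∀ t ∈ Set.Icc (0:ℝ) T, ∀ x : Fin d → ℝ,
      |v t x| ≤ N * Real.exp (N * T) * (Hbar + K + Cg) := by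
  classical
  refine ⟨K₀ + 1, by linarith, ?_⟩
  rintro δhat ⟨hδ0, hδ1⟩ hdm l hl1 _hl2
  refine ⟨δhat / (K₀ + 1), by positivity, ?_⟩
  intro Hbar K T hHbar hK hT cH hcH1 hcH2 g Cg hg h hh v Fh hFh hbd hint
  obtain ⟨Mv, hMv⟩ := hbd
  obtain ⟨hh0, hhh0⟩ := hh
  set N : ℝ := K₀ + 1 with hNdef
  clear_value N
  have hN1 : (1:ℝ) ≤ N := by simp [hNdef]; linarith
  have hN0 : (0:ℝ) < N := by linarith
  have hδinv : 1 ≤ δhat⁻¹ := (one_le_inv₀ hδ0).2 hδ1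
  have hδinv0 : 0 < δhat⁻¹ := by positivity
  have hKh : K₀ * h ≤ δhat := by
    rw [hNdef] at hhh0
    have h2 : K₀ * h ≤ K₀ * (δhat / (K₀ + 1)) := mul_le_mul_of_nonneg_left hhh0 hK₀
    have h3 : K₀ * (δhat / (K₀ + 1)) ≤ δhat := by
      rw [mul_div_assoc', div_le_iff₀ (by linarith : (0:ℝ) < K₀ + 1)]
      have he : δhat * (K₀ + 1) = K₀ * δhat + δhat := by ring
      linarith only [hδ0, he]
    linarith
  have h2δ : 2 / δhat = δhat⁻¹ + δhat⁻¹ := by rw [div_eq_mul_inv]; ring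
  have hB0 : 0 ≤ 2 / δhat := by positivity
  have hmR : (0:ℝ) < m := by exact_mod_cast hm
  have hdmR : (d:ℝ) ≤ (m:ℝ) := by exact_mod_cast hdm
  have hCg0 : 0 ≤ Cg := le_trans (abs_nonneg _) (hg 0)
  set κ : ℝ := Hbar + K + Cg with hκdef
  clear_value κ
  have hκ0 : 0 < κ := by simp only [hκdef]; linarith
  set lam : ℝ := 6 * (m:ℝ) / (δhat * h ^ 2) with hlamdef
  have hlam0 : 0 < lam := by
    rw [hlamdef]
    apply div_pos (by linarith) (by positivity)
  clear_value lam
  set W : ℝ → ℝ := fun r => sSup (Set.range fun y => |v r y|) with hWdef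
  have hWge : ∀ r ∈ Set.Icc (0:ℝ) T, ∀ y, |v r y| ≤ W r := by
    intro r hr y
    refine le_csSup ⟨Mv, ?_⟩ ⟨y, rfl⟩
    rintro _ ⟨y', rfl⟩; exact hMv r hr y'
  have hWsup : ∀ r (c : ℝ), 0 ≤ c → (∀ y, |v r y| ≤ c) → W r ≤ c := by
    intro r c hc hyc
    apply Real.sSup_le ?_ hc
    rintro _ ⟨y, rfl⟩; exact hyc y
  have hWnear : ∀ r (c : ℝ), c < W r → ∃ y, c < |v r y| := by
    intro r c hc
    obtain ⟨w, hwmem, hw⟩ := exists_lt_of_lt_csSup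
      (Set.range_nonempty (f := fun y => |v r y|)) hc
    obtain ⟨y, rfl⟩ := hwmem
    exact ⟨y, hw⟩
  clear_value W
  have hW0 : ∀ r ∈ Set.Icc (0:ℝ) T, 0 ≤ W r :=
    fun r hr => le_trans (abs_nonneg _) (hWge r hr 0)
  set Mv' : ℝ := max Mv 0 with hMv'def
  have hMv'0 : 0 ≤ Mv' := le_max_right _ _
  have hMvle : Mv ≤ Mv' := le_max_left _ _
  clear_value Mv'
  have hWle : ∀ r ∈ Set.Icc (0:ℝ) T, W r ≤ Mv' := by
    intro r hr
    exact hWsup r Mv' hMv'0 (fun y => (hMv r hr y).trans hMvle)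
  have hmul : ∀ c t u : ℝ, 0 ≤ c → c ≤ 2 / δhat → 0 ≤ u → t ≤ u →
      c * t ≤ 2 / δhat * u := by
    intro c t u h1 h2 h3 h4
    rcases le_total t 0 with h5 | h5
    · calc c * t ≤ 0 := mul_nonpos_of_nonneg_of_nonpos h1 h5
        _ ≤ 2 / δhat * u := by positivity
    · exact mul_le_mul h2 h4 h5 hB0
  -- the key pointwise estimate
  have keyA : ∀ r ∈ Set.Icc (0:ℝ) T, ∀ y : Fin d → ℝ, ∀ σ : ℝ, (σ = 1 ∨ σ = -1) →
      σ * Fh r y ≤ K₀ * W r + Hbar + lam * (W r - σ * v r y) := by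
    intro r hr y σ hσ
    have hσa : |σ| = 1 := by rcases hσ with rfl | rfl <;> simp
    have habs : ∀ c : ℝ, σ * c ≤ |c| := by
      intro c; rcases hσ with rfl | rfl
      · rw [one_mul]; exact le_abs_self c
      · rw [neg_one_mul]; exact neg_le_abs c
    have hub : ∀ y', σ * v r y' ≤ W r := fun y' => (habs _).trans (hWge r hr y')
    set G : ℝ := W r - σ * v r y with hGdef
    have hG0 : 0 ≤ G := by have := hub y; simp only [hGdef]; linarith
    set P : Fin m → ℝ :=
      fun k => σ * v r (y + h • fun i => ((l k i : ℝ))) - σ * v r y with hPdef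
    set Q : Fin m → ℝ :=
      fun k => σ * v r (y - h • fun i => ((l k i : ℝ))) - σ * v r y with hQdef
    have hP : ∀ k, P k ≤ G := by
      intro k; simp only [hPdef, hGdef]
      have := hub (y + h • fun i => ((l k i : ℝ))); linarith
    have hQ : ∀ k, Q k ≤ G := by
      intro k; simp only [hQdef, hGdef]
      have := hub (y - h • fun i => ((l k i : ℝ))); linarith
    set Z : Fin m → ℝ :=
      fun k : Fin m => DeltaOp d h (fun i => ((l k i : ℝ))) (fun y' => v r y') y with hZdef
    have hz : ∀ k, σ * Z k = (P k + Q k) / h ^ 2 := by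
      intro k
      simp only [hZdef, DeltaOp, hPdef, hQdef]
      field_simp
      ring
    set U : Fin (d + 1) → ℝ := Fin.cons (v r y) (fun k : Fin d =>
      deltaOp d h (fun j => if j = k then (1:ℝ) else 0) (fun y' => v r y') y) with hUdef
    have hdd : ∀ i : Fin d, |U i.succ| = |P (Fin.castLE hdm i)| / h := by
      intro i
      have hvec : (fun j => if j = i then (1:ℝ) else 0)
          = (fun j => ((l (Fin.castLE hdm i) j : ℝ))) := by
        funext j; rw [hl1 i]
        by_cases hji : j = i <;> simp [hji]
      have hσP : |P (Fin.castLE hdm i)|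
          = |v r (y + h • fun j => ((l (Fin.castLE hdm i) j : ℝ))) - v r y| := by
        have hPe : P (Fin.castLE hdm i)
            = σ * (v r (y + h • fun j => ((l (Fin.castLE hdm i) j : ℝ))) - v r y) := by
          simp only [hPdef]; ring
        rw [hPe, abs_mul, hσa, one_mul]
      simp only [hUdef, Fin.cons_succ, deltaOp, hvec]
      rw [abs_div, abs_of_pos hh0, hσP]
    -- obtain the coefficients
    clear_value G P Q Z U
    obtain ⟨a, ha, hdiffa⟩ := hcH1 U r y Z 0
    -- per-term bounds
    have hb1 : ∀ k, a k * P k ≤ 2 / δhat * G := by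
      intro k
      exact hmul _ _ _ (le_trans hδ0.le (ha k).1)
        (le_trans (ha k).2 (by rw [h2δ]; linarith)) hG0 (hP k)
    have hb2 : ∀ k, a k * Q k ≤ 2 / δhat * G := by
      intro k
      exact hmul _ _ _ (le_trans hδ0.le (ha k).1)
        (le_trans (ha k).2 (by rw [h2δ]; linarith)) hG0 (hQ k)
    have hb3 : ∀ i : Fin d, K₀ * h * |P (Fin.castLE hdm i)|
        + a (Fin.castLE hdm i) * P (Fin.castLE hdm i) ≤ 2 / δhat * G := by
      intro i
      rcases abs_cases (P (Fin.castLE hdm i)) with ⟨habs1, _⟩ | ⟨habs1, hneg⟩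
      · rw [habs1]
        have he : K₀ * h * P (Fin.castLE hdm i) + a (Fin.castLE hdm i) * P (Fin.castLE hdm i)
            = (K₀ * h + a (Fin.castLE hdm i)) * P (Fin.castLE hdm i) := by ring
        rw [he]
        refine hmul _ _ _ ?_ ?_ hG0 (hP _)
        · have := (ha (Fin.castLE hdm i)).1
          have : 0 ≤ K₀ * h := by positivity
          linarith [(ha (Fin.castLE hdm i)).1]
        · rw [h2δ]
          have := (ha (Fin.castLE hdm i)).2
          linarith
      · rw [habs1]
        have he : K₀ * h * -P (Fin.castLE hdm i) + a (Fin.castLE hdm i) * P (Fin.castLE hdm i)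
            = (a (Fin.castLE hdm i) - K₀ * h) * P (Fin.castLE hdm i) := by ring
        rw [he]
        have hA : 0 ≤ a (Fin.castLE hdm i) - K₀ * h := by
          linarith [(ha (Fin.castLE hdm i)).1]
        calc (a (Fin.castLE hdm i) - K₀ * h) * P (Fin.castLE hdm i) ≤ 0 :=
              mul_nonpos_of_nonneg_of_nonpos hA hneg.le
          _ ≤ 2 / δhat * G := mul_nonneg hB0 hG0
    -- the main sum bound
    have hsum : K₀ * (∑ i : Fin d, |U i.succ|) + ∑ k, a k * (σ * Z k) ≤ lam * G := by
      have e2 : ∑ k, a k * (σ * Z k) = (∑ k, a k * (P k + Q k)) / h ^ 2 := by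
        rw [Finset.sum_div]
        refine Finset.sum_congr rfl fun k _ => ?_
        rw [hz k, mul_div_assoc]
      have e1 : K₀ * (∑ i : Fin d, |U i.succ|) = (K₀ * h * ∑ i, |P (Fin.castLE hdm i)|) / h ^ 2 := by
        have e1a : ∑ i : Fin d, |U i.succ| = (∑ i, |P (Fin.castLE hdm i)|) / h := by
          rw [Finset.sum_div]
          exact Finset.sum_congr rfl fun i _ => hdd i
        rw [e1a]; field_simp
      rw [e1, e2, ← add_div]
      have hnum : K₀ * h * ∑ i, |P (Fin.castLE hdm i)| + ∑ k, a k * (P k + Q k)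
          ≤ 3 * (m:ℝ) * (2 / δhat * G) := by
        set s : Finset (Fin m) := Finset.image (Fin.castLE hdm) Finset.univ with hs
        have hinj : Function.Injective (Fin.castLE hdm) := Fin.castLE_injective hdm
        have himg : ∑ k ∈ s, a k * P k
            = ∑ i : Fin d, a (Fin.castLE hdm i) * P (Fin.castLE hdm i) := by
          rw [hs]
          exact Finset.sum_image (fun x _ y _ hxy => hinj hxy)
        have hsdiff : ∑ k ∈ Finset.univ \ s, a k * P k + ∑ k ∈ s, a k * P k
            = ∑ k, a k * P k := Finset.sum_sdiff (Finset.subset_univ s)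
        have hsplit : ∑ k, a k * (P k + Q k) = ∑ k, a k * P k + ∑ k, a k * Q k := by
          rw [← Finset.sum_add_distrib]
          exact Finset.sum_congr rfl fun k _ => by ring
        have hmulsum : K₀ * h * ∑ i, |P (Fin.castLE hdm i)|
            = ∑ i, K₀ * h * |P (Fin.castLE hdm i)| := by rw [Finset.mul_sum]
        have c1 : ∑ k ∈ Finset.univ \ s, a k * P k ≤ (m:ℝ) * (2 / δhat * G) := by
          calc ∑ k ∈ Finset.univ \ s, a k * P k
              ≤ ∑ _k ∈ Finset.univ \ s, 2 / δhat * G :=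
                Finset.sum_le_sum fun k _ => hb1 k
            _ = ((Finset.univ \ s).card : ℝ) * (2 / δhat * G) := by
                rw [Finset.sum_const, nsmul_eq_mul]
            _ ≤ (m:ℝ) * (2 / δhat * G) := by
                refine mul_le_mul_of_nonneg_right ?_ (mul_nonneg hB0 hG0)
                have h5 : (Finset.univ \ s).card ≤ m := by
                  calc (Finset.univ \ s).card ≤ (Finset.univ : Finset (Fin m)).card :=
                      Finset.card_le_card (Finset.sdiff_subset)
                    _ = m := by simp
                exact_mod_cast h5
        have c2 : ∑ k, a k * Q k ≤ (m:ℝ) * (2 / δhat * G) := by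
          calc ∑ k, a k * Q k ≤ ∑ _k : Fin m, 2 / δhat * G :=
              Finset.sum_le_sum fun k _ => hb2 k
            _ = (m:ℝ) * (2 / δhat * G) := by
                rw [Finset.sum_const, nsmul_eq_mul]; simp
        have c3 : ∑ i : Fin d, (K₀ * h * |P (Fin.castLE hdm i)|
            + a (Fin.castLE hdm i) * P (Fin.castLE hdm i)) ≤ (d:ℝ) * (2 / δhat * G) := by
          calc ∑ i : Fin d, (K₀ * h * |P (Fin.castLE hdm i)|
              + a (Fin.castLE hdm i) * P (Fin.castLE hdm i))
              ≤ ∑ _i : Fin d, 2 / δhat * G := Finset.sum_le_sum fun i _ => hb3 i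
            _ = (d:ℝ) * (2 / δhat * G) := by
                rw [Finset.sum_const, nsmul_eq_mul]; simp
        have c4 : ∑ i : Fin d, (K₀ * h * |P (Fin.castLE hdm i)|
            + a (Fin.castLE hdm i) * P (Fin.castLE hdm i))
            = ∑ i, K₀ * h * |P (Fin.castLE hdm i)|
              + ∑ i : Fin d, a (Fin.castLE hdm i) * P (Fin.castLE hdm i) :=
          Finset.sum_add_distrib
        have c5 : (d:ℝ) * (2 / δhat * G) ≤ (m:ℝ) * (2 / δhat * G) :=
          mul_le_mul_of_nonneg_right hdmR (mul_nonneg hB0 hG0)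
        linarith [c1, c2, c3, c5]
      calc (K₀ * h * ∑ i, |P (Fin.castLE hdm i)| + ∑ k, a k * (P k + Q k)) / h ^ 2
          ≤ 3 * (m:ℝ) * (2 / δhat * G) / h ^ 2 := by
            apply div_le_div_of_nonneg_right hnum (by positivity)
        _ = lam * G := by rw [hlamdef]; field_simp; ring
    -- bound on the cH branch
    have hcHb : σ * cH U Z r y ≤ K₀ * W r + Hbar + lam * G := by
      have h0 : cH U Z r y = cH U 0 r y + ∑ k, a k * Z k := by
        have := hdiffa
        simp only [Pi.zero_apply, sub_zero] at this
        linarith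
      have h1 : σ * cH U Z r y = σ * cH U 0 r y + ∑ k, a k * (σ * Z k) := by
        rw [h0, mul_add, Finset.mul_sum]
        congr 1
        exact Finset.sum_congr rfl fun k _ => by ring
      have h2 : σ * cH U 0 r y ≤ K₀ * eunorm U + Hbar := (habs _).trans (hcH2 U r y)
      have h3 : eunorm U ≤ |v r y| + ∑ i : Fin d, |U i.succ| := by
        refine (aux_eunorm U).trans ?_
        rw [Fin.sum_univ_succ]
        simp only [hUdef, Fin.cons_zero]
        exact le_refl _
      have h4 : K₀ * eunorm U ≤ K₀ * |v r y| + K₀ * ∑ i : Fin d, |U i.succ| := by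
        have := mul_le_mul_of_nonneg_left h3 hK₀
        linarith [this]
      have h5 : K₀ * |v r y| ≤ K₀ * W r :=
        mul_le_mul_of_nonneg_left (hWge r hr y) hK₀
      linarith [hsum, h1, h2, h4, h5]
    -- assemble
    have hFh' : Fh r y = max (cH U Z r y) (Pcal m δhat Z - K) := by
      rw [hUdef, hZdef]; exact hFh r y
    rw [hFh']
    rcases hσ with rfl | rfl
    · rw [one_mul]
      refine max_le ?_ ?_
      · have := hcHb; rw [one_mul] at this; exact this
      · -- Pcal branch
        have hPcal1 : Pcal m δhat Z ≤ lam * G := by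
          apply Real.sSup_le ?_ (mul_nonneg hlam0.le hG0)
          rintro x' ⟨bb, hbb, rfl⟩
          have hterm : ∀ k, bb k * Z k ≤ 2 / δhat * (2 * G) / h ^ 2 := by
            intro k
            have hZk : Z k = (P k + Q k) / h ^ 2 := by
              have := hz k; rwa [one_mul] at this
            rw [hZk, ← mul_div_assoc]
            apply div_le_div_of_nonneg_right ?_ (by positivity)
            refine hmul _ _ _ ?_ ?_ (by linarith) (by linarith [hP k, hQ k])
            · linarith [(hbb k).1, hδ0]
            · rw [h2δ]; linarith [(hbb k).2]
          have hsum2 : ∑ k, bb k * Z k ≤ (m:ℝ) * (2 / δhat * (2 * G) / h ^ 2) := by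
            calc ∑ k, bb k * Z k ≤ ∑ _k : Fin m, 2 / δhat * (2 * G) / h ^ 2 :=
                Finset.sum_le_sum fun k _ => hterm k
              _ = (m:ℝ) * (2 / δhat * (2 * G) / h ^ 2) := by
                  rw [Finset.sum_const, nsmul_eq_mul]; simp
          have hcmp : (m:ℝ) * (2 / δhat * (2 * G) / h ^ 2) ≤ lam * G := by
            have he : lam * G - (m:ℝ) * (2 / δhat * (2 * G) / h ^ 2)
                = 2 * (m:ℝ) * G / (δhat * h ^ 2) := by
              rw [hlamdef]; field_simp; ring
            have hnn : 0 ≤ 2 * (m:ℝ) * G / (δhat * h ^ 2) := by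
              apply div_nonneg ?_ (by positivity)
              have : 0 ≤ 2 * (m:ℝ) := by positivity
              exact mul_nonneg this hG0
            linarith
          exact le_trans hsum2 hcmp
        have hKW : 0 ≤ K₀ * W r + Hbar := by
          have := mul_nonneg hK₀ (hW0 r hr); linarith
        linarith [hPcal1]
    · rw [neg_one_mul]
      have h7 : -(max (cH U Z r y) (Pcal m δhat Z - K)) ≤ -(cH U Z r y) :=
        neg_le_neg (le_max_left _ _)
      have h8 : -(cH U Z r y) = (-1) * cH U Z r y := by ring
      calc -(max (cH U Z r y) (Pcal m δhat Z - K)) ≤ -(cH U Z r y) := h7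
        _ = (-1) * cH U Z r y := h8
        _ ≤ K₀ * W r + Hbar + lam * G := hcHb
  -- uniform bound on |Fh|
  set Lb : ℝ := K₀ * Mv' + Hbar + lam * (2 * Mv') with hLbdef
  have hLb0 : 0 ≤ Lb := by
    have h1 : 0 ≤ K₀ * Mv' := mul_nonneg hK₀ hMv'0
    have h2 : 0 ≤ lam * (2 * Mv') := mul_nonneg hlam0.le (by linarith)
    simp only [hLbdef]; linarith
  clear_value Lb
  have hFhb : ∀ r ∈ Set.Icc (0:ℝ) T, ∀ y, |Fh r y| ≤ Lb := by
    intro r hr y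
    have h1 := keyA r hr y 1 (Or.inl rfl)
    have h2 := keyA r hr y (-1) (Or.inr rfl)
    rw [one_mul] at h1
    rw [neg_one_mul] at h2
    have hWr := hWle r hr
    have hW0r := hW0 r hr
    have hv2 := abs_le.mp ((hMv r hr y).trans (le_max_left Mv 0))
    have hc1 : K₀ * W r ≤ K₀ * Mv' := mul_le_mul_of_nonneg_left hWr hK₀
    have hc2 : lam * (W r - 1 * v r y) ≤ lam * (2 * Mv') := by
      apply mul_le_mul_of_nonneg_left ?_ hlam0.le
      rw [one_mul]; linarith [hv2.1]
    have hc3 : lam * (W r - (-1) * v r y) ≤ lam * (2 * Mv') := by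
      apply mul_le_mul_of_nonneg_left ?_ hlam0.le
      have : (-1 : ℝ) * v r y = -v r y := by ring
      rw [this]; linarith [hv2.2]
    rw [abs_le]
    constructor
    · simp only [hLbdef]; linarith
    · simp only [hLbdef]; linarith
  -- integrability and Lipschitz facts
  have hInt : ∀ t₁ t₂ : ℝ, t₁ ∈ Set.Icc (0:ℝ) T → t₁ ≤ t₂ → t₂ ≤ T →
      ∀ y, IntervalIntegrable (fun r => Fh r y) volume t₁ t₂ := by
    intro t₁ t₂ h1 h2 h3 y
    refine ((hint t₁ h1 y).1).mono_set ?_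
    rw [Set.uIcc_of_le h2, Set.uIcc_of_le h1.2]
    exact Set.Icc_subset_Icc le_rfl h3
  have hvdiff : ∀ t₁ t₂ : ℝ, t₁ ∈ Set.Icc (0:ℝ) T → t₂ ∈ Set.Icc (0:ℝ) T → t₁ ≤ t₂ →
      ∀ y, v t₁ y - v t₂ y = ∫ r in t₁..t₂, Fh r y := by
    intro t₁ t₂ h1 h2 h12 y
    have e1 := (hint t₁ h1 y).2
    have e2 := (hint t₂ h2 y).2
    have e3 : (∫ r in t₁..t₂, Fh r y) + (∫ r in t₂..T, Fh r y) = ∫ r in t₁..T, Fh r y :=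
      intervalIntegral.integral_add_adjacent_intervals
        (hInt t₁ t₂ h1 h12 h2.2 y) (hint t₂ h2 y).1
    linarith [e1, e2, e3]
  have hlip : ∀ t₁ t₂ : ℝ, t₁ ∈ Set.Icc (0:ℝ) T → t₂ ∈ Set.Icc (0:ℝ) T → t₁ ≤ t₂ →
      ∀ y, |v t₁ y - v t₂ y| ≤ Lb * (t₂ - t₁) := by
    intro t₁ t₂ h1 h2 h12 y
    rw [hvdiff t₁ t₂ h1 h2 h12 y]
    have hb := intervalIntegral.norm_integral_le_of_norm_le_const
      (C := Lb) (f := fun r => Fh r y) (a := t₁) (b := t₂) ?_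
    · rw [Real.norm_eq_abs, abs_of_nonneg (by linarith : (0:ℝ) ≤ t₂ - t₁)] at hb
      exact hb
    · intro r hr
      rw [Set.uIoc_of_le h12] at hr
      rw [Real.norm_eq_abs]
      exact hFhb r ⟨le_trans h1.1 hr.1.le, hr.2.trans h2.2⟩ y
  have hWlipd : ∀ t₁ t₂ : ℝ, t₁ ∈ Set.Icc (0:ℝ) T → t₂ ∈ Set.Icc (0:ℝ) T → t₁ ≤ t₂ →
      W t₁ ≤ W t₂ + Lb * (t₂ - t₁) ∧ W t₂ ≤ W t₁ + Lb * (t₂ - t₁) := by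
    intro t₁ t₂ h1 h2 h12
    have hnn : 0 ≤ Lb * (t₂ - t₁) := mul_nonneg hLb0 (by linarith)
    constructor
    · refine hWsup t₁ _ (by linarith [hW0 t₂ h2]) (fun y => ?_)
      have ha1 : |v t₁ y| ≤ |v t₂ y| + |v t₁ y - v t₂ y| := by
        calc |v t₁ y| = |v t₂ y + (v t₁ y - v t₂ y)| := by ring_nf
          _ ≤ |v t₂ y| + |v t₁ y - v t₂ y| := abs_add_le _ _
      linarith [hWge t₂ h2 y, hlip t₁ t₂ h1 h2 h12 y]
    · refine hWsup t₂ _ (by linarith [hW0 t₁ h1]) (fun y => ?_)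
      have ha1 : |v t₂ y| ≤ |v t₁ y| + |v t₁ y - v t₂ y| := by
        calc |v t₂ y| = |v t₁ y - (v t₁ y - v t₂ y)| := by ring_nf
          _ ≤ |v t₁ y| + |v t₁ y - v t₂ y| := by
              rw [sub_eq_add_neg]
              exact (abs_add_le _ _).trans (by rw [abs_neg])
      linarith [hWge t₁ h1 y, hlip t₁ t₂ h1 h2 h12 y]
  have hWcont : ContinuousOn W (Set.Icc 0 T) := by
    rw [Metric.continuousOn_iff]
    intro t₁ h1 ε hε
    refine ⟨ε / (Lb + 1), div_pos hε (by linarith only [hLb0]), ?_⟩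
    intro t₂ h2 hdist
    rw [Real.dist_eq] at hdist ⊢
    have key : |W t₂ - W t₁| ≤ Lb * |t₂ - t₁| := by
      rcases le_total t₁ t₂ with hle | hle
      · obtain ⟨k1, k2⟩ := hWlipd t₁ t₂ h1 h2 hle
        rw [abs_of_nonneg (by linarith : (0:ℝ) ≤ t₂ - t₁)]
        rw [abs_le]; constructor <;> linarith
      · obtain ⟨k1, k2⟩ := hWlipd t₂ t₁ h2 h1 hle
        rw [abs_of_nonpos (by linarith : t₂ - t₁ ≤ 0)]
        rw [abs_le]; constructor <;> linarith
    have h3 : Lb * |t₂ - t₁| ≤ Lb * (ε / (Lb + 1)) :=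
      mul_le_mul_of_nonneg_left hdist.le hLb0
    have h4 : Lb * (ε / (Lb + 1)) < ε := by
      rw [mul_div_assoc', div_lt_iff₀ (by linarith : (0:ℝ) < Lb + 1)]
      have he : ε * (Lb + 1) = Lb * ε + ε := by ring
      linarith only [hε, he]
    linarith
  -- the barrier function
  set Φ : ℝ → ℝ := fun r => Real.exp (N * (T - r)) * κ with hΦdef
  clear_value Φ
  have hΦcont : Continuous Φ := by
    rw [hΦdef]
    exact (Real.continuous_exp.comp
      (continuous_const.mul (continuous_const.sub continuous_id))).mul continuous_const
  have hΦmono : ∀ t₁ t₂ : ℝ, t₁ ≤ t₂ → Φ t₂ ≤ Φ t₁ := by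
    intro t₁ t₂ h12
    simp only [hΦdef]
    apply mul_le_mul_of_nonneg_right ?_ hκ0.le
    refine Real.exp_le_exp.mpr ?_
    exact mul_le_mul_of_nonneg_left (by linarith only [h12]) hN0.le
  have hΦge : ∀ t' ∈ Set.Icc (0:ℝ) T, κ ≤ Φ t' := by
    intro t' ht'
    simp only [hΦdef]
    have h1 : (1:ℝ) ≤ Real.exp (N * (T - t')) :=
      Real.one_le_exp (mul_nonneg hN0.le (by linarith only [ht'.2]))
    have h2 := mul_le_mul_of_nonneg_right h1 hκ0.le
    linarith only [h2]
  have hΦle : ∀ t' ∈ Set.Icc (0:ℝ) T, Φ t' ≤ Real.exp (N * T) * κ := by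
    intro t' ht'
    simp only [hΦdef]
    apply mul_le_mul_of_nonneg_right ?_ hκ0.le
    refine Real.exp_le_exp.mpr ?_
    exact mul_le_mul_of_nonneg_left (by linarith only [ht'.1]) hN0.le
  -- main claim
  suffices hmain : ∀ s' ∈ Set.Icc (0:ℝ) T, W s' ≤ Φ s' by
    intro t ht x
    have h1 : |v t x| ≤ W t := hWge t ht x
    have h2 := hmain t ht
    have h3 := hΦle t ht
    have h4 : Real.exp (N * T) * κ ≤ N * Real.exp (N * T) * κ := by
      have h5 : 0 ≤ Real.exp (N * T) * κ := le_of_lt (mul_pos (Real.exp_pos _) hκ0)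
      have h6 := mul_nonneg (by linarith only [hN1] : (0:ℝ) ≤ N - 1) h5
      have he : N * Real.exp (N * T) * κ - Real.exp (N * T) * κ
          = (N - 1) * (Real.exp (N * T) * κ) := by ring
      linarith only [h6, he]
    linarith
  by_contra hcon
  push_neg at hcon
  obtain ⟨s₀, hs₀, hWs₀⟩ := hcon
  set S : Set ℝ := {t' | t' ∈ Set.Icc (0:ℝ) T ∧ Φ t' ≤ W t'} with hSdef
  have hSne : S.Nonempty := ⟨s₀, hs₀, hWs₀.le⟩
  have hSsub : S ⊆ Set.Icc 0 T := fun t' ht' => ht'.1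
  have hSclosed : IsClosed S := by
    have hf : ContinuousOn (fun t' => W t' - Φ t') (Set.Icc 0 T) :=
      hWcont.sub hΦcont.continuousOn
    have hseq : S = Set.Icc 0 T ∩ (fun t' => W t' - Φ t') ⁻¹' Set.Ici 0 := by
      ext t'
      simp only [hSdef, Set.mem_setOf_eq, Set.mem_inter_iff, Set.mem_preimage, Set.mem_Ici]
      constructor
      · rintro ⟨ha1, ha2⟩; exact ⟨ha1, by linarith⟩
      · rintro ⟨ha1, ha2⟩; exact ⟨ha1, by linarith⟩
    rw [hseq]
    exact hf.preimage_isClosed_of_isClosed isClosed_Icc isClosed_Ici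
  have hScompact : IsCompact S := isCompact_Icc.of_isClosed_subset hSclosed hSsub
  set t₀ : ℝ := sSup S with ht₀def
  clear_value t₀
  have ht₀S : t₀ ∈ S := by rw [ht₀def]; exact hScompact.sSup_mem hSne
  have ht₀Icc : t₀ ∈ Set.Icc 0 T := ht₀S.1
  have hWt₀ : Φ t₀ ≤ W t₀ := ht₀S.2
  have hWT : W T ≤ Cg := by
    refine hWsup T Cg hCg0 (fun y => ?_)
    have he := (hint T ⟨hT.le, le_rfl⟩ y).2
    rw [intervalIntegral.integral_same] at he
    rw [he]; simpa using hg y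
  have hΦT : Φ T = κ := by simp [hΦdef]
  have hTS : T ∉ S := by
    intro hTS'
    have h5 := hTS'.2
    rw [hΦT] at h5
    simp only [hκdef] at h5
    linarith
  have ht₀T : t₀ < T := lt_of_le_of_ne ht₀Icc.2 (fun he => hTS (he ▸ ht₀S))
  have hSbdd : BddAbove S := ⟨T, fun s' hs' => hs'.1.2⟩
  have hafter : ∀ r, t₀ < r → r ≤ T → W r < Φ r := by
    intro r h1 h2
    by_contra hc
    push_neg at hc
    have hrS : r ∈ S := ⟨⟨le_trans ht₀Icc.1 h1.le, h2⟩, hc⟩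
    have := le_csSup hSbdd hrS
    rw [← ht₀def] at this
    linarith
  have heq : W t₀ = Φ t₀ := by
    refine le_antisymm ?_ hWt₀
    by_contra hc
    push_neg at hc
    set ε' : ℝ := W t₀ - Φ t₀ with hε'def
    have hε'0 : 0 < ε' := by simp only [hε'def]; linarith
    clear_value ε'
    have hq : 0 < ε' / (Lb + 1) := div_pos hε'0 (by linarith only [hLb0])
    set r : ℝ := min T (t₀ + ε' / (Lb + 1)) with hrdef
    have hr1 : t₀ < r := lt_min ht₀T (by linarith)
    have hr2 : r ≤ T := min_le_left _ _
    have hr3 : r - t₀ ≤ ε' / (Lb + 1) := by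
      have h6 := min_le_right T (t₀ + ε' / (Lb + 1))
      rw [← hrdef] at h6
      linarith
    clear_value r
    have hrIcc : r ∈ Set.Icc (0:ℝ) T := ⟨le_trans ht₀Icc.1 hr1.le, hr2⟩
    obtain ⟨k1, k2⟩ := hWlipd t₀ r ht₀Icc hrIcc hr1.le
    have hΦr : Φ r ≤ Φ t₀ := hΦmono _ _ hr1.le
    have hWr : W r < Φ r := hafter r hr1 hr2
    have hLbb : Lb * (r - t₀) ≤ Lb * (ε' / (Lb + 1)) := mul_le_mul_of_nonneg_left hr3 hLb0
    have hfr : Lb * (ε' / (Lb + 1)) < ε' := by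
      rw [mul_div_assoc', div_lt_iff₀ (by linarith : (0:ℝ) < Lb + 1)]
      have he : ε' * (Lb + 1) = Lb * ε' + ε' := by ring
      linarith only [hε'0, he]
    have : W t₀ < W t₀ := by
      calc W t₀ ≤ W r + Lb * (r - t₀) := k1
        _ < Φ r + ε' := by linarith
        _ ≤ Φ t₀ + ε' := by linarith
        _ = W t₀ := by simp only [hε'def]; ring
    exact lt_irrefl _ this
  -- final contradiction
  set b : ℝ := Φ t₀ with hbdef
  clear_value b
  have hbκ : κ ≤ b := by rw [hbdef]; exact hΦge t₀ ht₀Icc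
  have hb0 : 0 < b := lt_of_lt_of_le hκ0 hbκ
  set bmax : ℝ := Real.exp (N * T) * κ with hbmaxdef
  clear_value bmax
  have hbmax : b ≤ bmax := by rw [hbdef]; exact hΦle t₀ ht₀Icc
  have hbmax0 : 0 < bmax := by rw [hbmaxdef]; exact mul_pos (Real.exp_pos _) hκ0
  set D : ℝ := bmax * N ^ 2 + lam * Lb + 1 with hDdef
  have hD0 : 0 < D := by
    have h1 : 0 ≤ bmax * N ^ 2 := mul_nonneg hbmax0.le (sq_nonneg N)
    have h2 : 0 ≤ lam * Lb := mul_nonneg hlam0.le hLb0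
    rw [hDdef]; linarith
  clear_value D
  set η : ℝ := min (T - t₀) (K / (2 * D)) with hηdef
  have hη0 : 0 < η := lt_min (by linarith) (div_pos hK (by linarith only [hD0]))
  have hη1 : η ≤ T - t₀ := min_le_left _ _
  have hη1' : η ≤ K / (2 * D) := min_le_right _ _
  clear_value η
  have hη2 : η * D ≤ K / 2 := by
    rw [le_div_iff₀ (by linarith : (0:ℝ) < 2 * D)] at hη1'
    have he : η * (2 * D) = 2 * (η * D) := by ring
    linarith only [hη1', he]
  set t₁ : ℝ := t₀ + η with ht₁def
  clear_value t₁
  have ht₁T : t₁ ≤ T := by simp only [ht₁def]; linarith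
  have ht₀t₁ : t₀ < t₁ := by simp only [ht₁def]; linarith
  have ht₁Icc : t₁ ∈ Set.Icc (0:ℝ) T := ⟨by linarith [ht₀Icc.1], ht₁T⟩
  have h1lam : 0 < 1 + lam * η := by linarith only [mul_pos hlam0 hη0]
  set dlt : ℝ := η * K / (4 * (1 + lam * η)) with hdltdef
  have hdlt0 : 0 < dlt := by
    rw [hdltdef]
    apply div_pos (mul_pos hη0 hK) (by linarith only [h1lam])
  clear_value dlt
  -- pick a near-maximum point
  obtain ⟨xb, hxb⟩ := hWnear t₀ (W t₀ - dlt) (by linarith only [hdlt0])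
  set σb : ℝ := if 0 ≤ v t₀ xb then 1 else -1 with hσbdef
  clear_value σb
  have hσbor : σb = 1 ∨ σb = -1 := by
    simp only [hσbdef]; split_ifs <;> simp
  have hσbv : σb * v t₀ xb = |v t₀ xb| := by
    simp only [hσbdef]; split_ifs with hvs
    · rw [one_mul, abs_of_nonneg hvs]
    · rw [abs_of_neg (lt_of_not_ge hvs)]; ring
  have hstart : b - dlt < σb * v t₀ xb := by
    rw [hσbv]
    linarith only [hxb, heq]
  have habsσb : ∀ c : ℝ, σb * c ≤ |c| := by
    intro c; rcases hσbor with he | he <;> rw [he]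
    · rw [one_mul]; exact le_abs_self c
    · rw [neg_one_mul]; exact neg_le_abs c
  -- pointwise bound on [t₀, t₁]
  set R : ℝ := K₀ * b + Hbar + lam * (dlt + Lb * η) with hRdef
  clear_value R
  have hptw : ∀ r ∈ Set.Icc t₀ t₁, σb * Fh r xb ≤ R := by
    intro r hrm
    have hrIcc : r ∈ Set.Icc (0:ℝ) T := ⟨le_trans ht₀Icc.1 hrm.1, le_trans hrm.2 ht₁T⟩
    have h1 := keyA r hrIcc xb σb hσbor
    have hWrb : W r ≤ b := by
      rcases eq_or_lt_of_le hrm.1 with he | hlt'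
      · rw [← he]; exact le_of_eq heq
      · rw [hbdef]
        exact le_trans (hafter r hlt' (le_trans hrm.2 ht₁T)).le (hΦmono _ _ hrm.1)
    have hvlip := hlip t₀ r ht₀Icc hrIcc hrm.1 xb
    have hσlip : σb * v t₀ xb - σb * v r xb ≤ Lb * (r - t₀) := by
      have h2 : σb * (v t₀ xb - v r xb) ≤ |v t₀ xb - v r xb| := habsσb _
      have h3 : σb * v t₀ xb - σb * v r xb = σb * (v t₀ xb - v r xb) := by ring
      linarith
    have hrt : r - t₀ ≤ η := by
      have := hrm.2; simp only [ht₁def] at this; linarith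
    have hLbr : Lb * (r - t₀) ≤ Lb * η := mul_le_mul_of_nonneg_left hrt hLb0
    have hσvr : b - dlt - Lb * η ≤ σb * v r xb := by linarith
    have harg : W r - σb * v r xb ≤ dlt + Lb * η := by linarith
    have hK₀W : K₀ * W r ≤ K₀ * b := mul_le_mul_of_nonneg_left hWrb hK₀
    have hlamarg : lam * (W r - σb * v r xb) ≤ lam * (dlt + Lb * η) :=
      mul_le_mul_of_nonneg_left harg hlam0.le
    simp only [hRdef]; linarith
  -- integrate the bound
  have hid : σb * v t₀ xb - σb * v t₁ xb = ∫ r in t₀..t₁, σb * Fh r xb := by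
    have h1 := hvdiff t₀ t₁ ht₀Icc ht₁Icc ht₀t₁.le xb
    rw [intervalIntegral.integral_const_mul, ← h1]; ring
  have hIbd : (∫ r in t₀..t₁, σb * Fh r xb) ≤ η * R := by
    have h1 : (∫ r in t₀..t₁, σb * Fh r xb) ≤ ∫ _r in t₀..t₁, R := by
      apply intervalIntegral.integral_mono_on ht₀t₁.le ?_ intervalIntegrable_const hptw
      exact (hInt t₀ t₁ ht₀Icc ht₀t₁.le ht₁T xb).const_mul σb
    rw [intervalIntegral.integral_const, smul_eq_mul] at h1
    have he : t₁ - t₀ = η := by simp only [ht₁def]; ring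
    rw [he] at h1
    exact h1
  have hWt₁ : W t₁ ≤ Φ t₁ := (hafter t₁ ht₀t₁ ht₁T).le
  have hvt₁ : σb * v t₁ xb ≤ W t₁ := (habsσb _).trans (hWge t₁ ht₁Icc xb)
  have hΦt₁ : Φ t₁ = b * Real.exp (-(N * η)) := by
    rw [hbdef]
    simp only [hΦdef]
    rw [show N * (T - t₁) = N * (T - t₀) + -(N * η) from by rw [ht₁def]; ring,
      Real.exp_add]
    ring
  have hexp := aux_exp (N * η) (mul_nonneg hN0.le hη0.le)
  have hbΦ : b * (N * η - (N * η) ^ 2) ≤ b - Φ t₁ := by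
    rw [hΦt₁]
    have h2 := mul_le_mul_of_nonneg_left hexp hb0.le
    have he : b * (1 - Real.exp (-(N * η))) = b - b * Real.exp (-(N * η)) := by ring
    linarith only [h2, he]
  have hHb : Hbar ≤ b - K := by
    have : κ = Hbar + K + Cg := hκdef
    linarith [hbκ]
  have hfinal : b - dlt - Φ t₁ ≤ η * R := by
    linarith only [hid, hIbd, hstart, hvt₁, hWt₁]
  -- arithmetic contradiction
  have hexp2 : η * R = η * (K₀ * b) + η * Hbar + η * (lam * dlt) + η * (lam * (Lb * η)) := by
    simp only [hRdef]; ring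
  have hHb2 : η * Hbar ≤ η * (b - K) := mul_le_mul_of_nonneg_left hHb hη0.le
  have hNb : b * (N * η) = η * (K₀ * b) + η * b := by
    simp only [hNdef]; ring
  have hineq : η * K ≤ dlt + b * (N * η) ^ 2 + η * (lam * dlt) + η * (lam * (Lb * η)) := by
    have he1 : b * (N * η - (N * η) ^ 2) = b * (N * η) - b * (N * η) ^ 2 := by ring
    have he2 : η * (b - K) = η * b - η * K := by ring
    linarith only [hfinal, hbΦ, hexp2, hHb2, hNb, he1, he2]
  have hdlteq : dlt * (1 + lam * η) = η * K / 4 := by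
    simp only [hdltdef]
    field_simp
  have hDb : η * (b * N ^ 2 + lam * Lb) ≤ η * D := by
    apply mul_le_mul_of_nonneg_left ?_ hη0.le
    have h1 : b * N ^ 2 ≤ bmax * N ^ 2 := mul_le_mul_of_nonneg_right hbmax (sq_nonneg N)
    simp only [hDdef]; linarith
  have hsq : b * (N * η) ^ 2 + η * (lam * (Lb * η)) = η * (η * (b * N ^ 2 + lam * Lb)) := by
    ring
  have hl1 : dlt + η * (lam * dlt) = dlt * (1 + lam * η) := by ring
  have hterm2 : η * (η * (b * N ^ 2 + lam * Lb)) ≤ η * (K / 2) := by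
    apply mul_le_mul_of_nonneg_left ?_ hη0.le
    linarith [hDb, hη2]
  have hlast : η * K ≤ η * K / 4 + η * (K / 2) := by
    rw [← hdlteq]
    linarith only [hineq, hsq, hl1, hterm2]
  have he : η * (K / 2) = η * K / 2 := by ring
  linarith only [hlast, he, mul_pos hη0 hK]
end
end

section
/- Let r ≥ 2 be an integer, N₁ ≥ 0 a real constant, and u : ℤ → ℝ a function satisfying u(i+1) − 2u(i) + u(i−1) ≥ −N₁ for all integers i with −r+2 ≤ i ≤ r−1. Then |u(1) − u(0)| ≤ N₁ r / 2 + (2/(r−1)) · max{ |u(i)| : −r+1 ≤ i ≤ r }. -/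
/-- Discrete interpolation inequality (proof of Lemma 5.5 of Krylov,
"An ersatz existence theorem for fully nonlinear parabolic equations
without convexity assumptions").  The maximum of `|u i|` over
`-r+1 ≤ i ≤ r` is expressed through an arbitrary upper bound `M`. -/
theorem discrete_interpolation_abs
    (r : ℤ) (hr : 2 ≤ r) (N₁ : ℝ) (hN₁ : 0 ≤ N₁) (u : ℤ → ℝ)
    (h : ∀ i : ℤ, -r + 2 ≤ i → i ≤ r - 1 → u (i + 1) - 2 * u i + u (i - 1) ≥ -N₁)
    (M : ℝ) (hM : ∀ i : ℤ, -r + 1 ≤ i → i ≤ r → |u i| ≤ M) :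
    |u 1 - u 0| ≤ N₁ * (r : ℝ) / 2 + 2 / ((r : ℝ) - 1) * M := by
  have hrR : (2:ℝ) ≤ (r:ℝ) := by exact_mod_cast hr
  have hr1 : (0:ℝ) < (r:ℝ) - 1 := by linarith
  set w : ℤ → ℝ := fun i => u (i+1) - u i + N₁ * i with hw
  clear_value w
  have hweq : ∀ i : ℤ, w i = u (i+1) - u i + N₁ * i := fun i => by rw [hw]
  -- monotonicity of w
  have mono : ∀ i : ℤ, -r+1 ≤ i → ∀ j : ℤ, i ≤ j → j ≤ r - 1 → w i ≤ w j := by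
    intro i hi j hij
    refine Int.le_induction (motive := fun j _ => j ≤ r - 1 → w i ≤ w j) ?_ ?_ j hij
    · exact fun _ => le_rfl
    · intro j hj ih hjr
      have ihh := ih (by omega)
      have hstep := h (j+1) (by omega) (by omega)
      rw [show j+1-1 = j by ring] at hstep
      have e1 : w (j+1) = u (j+1+1) - u (j+1) + N₁ * ((j:ℝ)+1) := by
        rw [hweq (j+1)]; push_cast; ring
      have e2 : w j = u (j+1) - u j + N₁ * (j:ℝ) := hweq j
      calc w i ≤ w j := ihh
        _ ≤ w (j+1) := by rw [e1, e2]; linarith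
  -- upper sum bound
  have pos : ∀ k : ℤ, 1 ≤ k → k ≤ r →
      ((k:ℝ)-1) * w 0 - N₁ * ((k:ℝ)*((k:ℝ)-1)/2) ≤ u k - u 1 := by
    intro k hk
    refine Int.le_induction
      (motive := fun k _ => k ≤ r → ((k:ℝ)-1) * w 0 - N₁ * ((k:ℝ)*((k:ℝ)-1)/2) ≤ u k - u 1)
      ?_ ?_ k hk
    · intro _; norm_num
    · intro k hk ih hkr
      have ih' := ih (by omega)
      have hwk : w 0 ≤ u (k+1) - u k + N₁ * (k:ℝ) := by
        rw [← hweq k]; exact mono 0 (by omega) k (by omega) (by omega)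
      push_cast
      nlinarith [ih', hwk]
  -- lower sum bound
  have neg : ∀ k : ℤ, 1 ≤ k → k ≤ r →
      u 0 - u (1-k) ≤ ((k:ℝ)-1) * w 0 + N₁ * ((k:ℝ)*((k:ℝ)-1)/2) := by
    intro k hk
    refine Int.le_induction
      (motive := fun k _ => k ≤ r → u 0 - u (1-k) ≤ ((k:ℝ)-1) * w 0 + N₁ * ((k:ℝ)*((k:ℝ)-1)/2))
      ?_ ?_ k hk
    · intro _; norm_num
    · intro k hk ih hkr
      have ih' := ih (by omega)
      rw [show (1:ℤ)-k = -k+1 by ring] at ih'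
      have hwk : u (-k+1) - u (-k) + N₁ * ((-k:ℤ):ℝ) ≤ w 0 := by
        rw [← hweq (-k)]; exact mono (-k) (by omega) 0 (by omega) (by omega)
      rw [show (1:ℤ)-(k+1) = -k by ring]
      push_cast at hwk ⊢
      nlinarith [ih', hwk]
  have hw0 : u 1 - u 0 = w 0 := by rw [hweq 0]; norm_num
  have hM0 : |u 0| ≤ M := hM 0 (by omega) (by omega)
  have hM1 : |u 1| ≤ M := hM 1 (by omega) (by omega)
  have hMr : |u r| ≤ M := hM r (by omega) (by omega)
  have hMnr : |u (1-r)| ≤ M := hM (1-r) (by omega) (by omega)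
  rw [abs_le] at hM0 hM1 hMr hMnr
  have A := pos r (by omega) le_rfl
  have B := neg r (by omega) le_rfl
  have hident : (2*M + N₁*(r:ℝ)*((r:ℝ)-1)/2)/((r:ℝ)-1)
      = N₁ * (r:ℝ) / 2 + 2 / ((r:ℝ)-1) * M := by
    field_simp; ring
  rw [abs_le]
  constructor
  · -- lower bound
    have hB : -(2*M + N₁*(r:ℝ)*((r:ℝ)-1)/2)/((r:ℝ)-1) ≤ w 0 := by
      rw [div_le_iff₀ hr1]
      nlinarith [B]
    rw [hw0]
    have heq : -(2*M + N₁*(r:ℝ)*((r:ℝ)-1)/2)/((r:ℝ)-1)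
        = -((2*M + N₁*(r:ℝ)*((r:ℝ)-1)/2)/((r:ℝ)-1)) := by ring
    rw [heq, hident] at hB
    exact hB
  · have hA : w 0 ≤ (2*M + N₁*(r:ℝ)*((r:ℝ)-1)/2)/((r:ℝ)-1) := by
      rw [le_div_iff₀ hr1]
      nlinarith [A]
    rw [hw0]
    rw [hident] at hA
    exact hA
end

section
/- For every integer r ≥ 2 and every function w : ℤ → ℝ: |w(1) − w(0)| ≤ (r/2) · max{ |w(i+1) − 2w(i) + w(i−1)| : |i| ≤ r } + (4/r) · max{ |w(i)| : |i| ≤ r }. -/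
/-- Inequality (9.24.7) of Krylov, "An ersatz existence theorem for fully
nonlinear parabolic equations without convexity assumptions": a discrete
interpolation inequality bounding a first difference by the second
differences and by the size of the function.  The maxima over `|i| ≤ r`
are expressed through arbitrary upper bounds `A` and `B`. -/
theorem discrete_interpolation_first_by_second
    (r : ℤ) (hr : 2 ≤ r) (w : ℤ → ℝ) (A B : ℝ)
    (hA : ∀ i : ℤ, |i| ≤ r → |w (i + 1) - 2 * w i + w (i - 1)| ≤ A)
    (hB : ∀ i : ℤ, |i| ≤ r → |w i| ≤ B) :
    |w 1 - w 0| ≤ (r : ℝ) / 2 * A + 4 / (r : ℝ) * B := by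
  have hA0 : 0 ≤ A := le_trans (abs_nonneg _) (hA 0 (by simpa using by omega))
  have hB0 : 0 ≤ B := le_trans (abs_nonneg _) (hB 0 (by simpa using by omega))
  set n := r.toNat with hn
  have hnr : (n : ℤ) = r := Int.toNat_of_nonneg (by omega)
  have hn2 : 2 ≤ n := by omega
  have hrR : (0:ℝ) < (r:ℝ) := by exact_mod_cast lt_of_lt_of_le (by norm_num) hr
  set d : ℤ → ℝ := fun i => w (i + 1) - w i with hd
  have key : ∀ k : ℕ, (k : ℤ) ≤ r - 1 → |d k - d 0| ≤ k * A := by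
    intro k
    induction k with
    | zero => simp
    | succ m ih =>
      intro hk
      have h1 : |d m - d 0| ≤ m * A := ih (by push_cast at hk ⊢; omega)
      have h2 := hA ((m : ℤ) + 1) (by
        rw [abs_of_nonneg (by positivity)]; push_cast at hk ⊢; omega)
      have h3 : d ((m : ℕ) + 1 : ℕ) - d m
          = w ((m : ℤ) + 1 + 1) - 2 * w ((m : ℤ) + 1) + w ((m : ℤ) + 1 - 1) := by
        simp only [hd]
        push_cast
        rw [add_sub_cancel_right]
        ring
      calc |d ((m:ℕ)+1 : ℕ) - d 0| = |(d ((m:ℕ)+1 : ℕ) - d m) + (d m - d 0)| := by ring_nf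
        _ ≤ |d ((m:ℕ)+1 : ℕ) - d m| + |d m - d 0| := abs_add_le _ _
        _ ≤ A + m * A := by rw [h3]; exact add_le_add h2 h1
        _ = ((m:ℕ)+1 : ℕ) * A := by push_cast; ring
  have tel : ∑ k ∈ Finset.range n, d k = w n - w 0 := by
    have := Finset.sum_range_sub (f := fun k : ℕ => w k) n
    simpa [hd, Nat.cast_succ] using this
  have hsum : (n : ℝ) * |d 0| ≤ ∑ k ∈ Finset.range n, |d k - d 0| + 2 * B := by
    have h4 : (n : ℝ) * d 0 = (w n - w 0) - ∑ k ∈ Finset.range n, (d k - d 0) := by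
      rw [Finset.sum_sub_distrib, tel, Finset.sum_const, Finset.card_range]
      ring
    have h5 : |w (n:ℤ) - w 0| ≤ 2 * B := by
      have := hB (n:ℤ) (by rw [abs_of_nonneg (by omega)]; omega)
      have h0 := hB 0 (by simpa using by omega)
      calc |w (n:ℤ) - w 0| ≤ |w (n:ℤ)| + |w 0| := abs_sub _ _
        _ ≤ 2 * B := by linarith
    calc (n : ℝ) * |d 0| = |(n : ℝ) * d 0| := by
          rw [abs_mul, Nat.abs_cast]
      _ = |(w (n:ℤ) - w 0) - ∑ k ∈ Finset.range n, (d k - d 0)| := by rw [h4]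
      _ ≤ |w (n:ℤ) - w 0| + |∑ k ∈ Finset.range n, (d k - d 0)| := abs_sub _ _
      _ ≤ 2 * B + ∑ k ∈ Finset.range n, |d k - d 0| :=
          add_le_add h5 (Finset.abs_sum_le_sum_abs _ _)
      _ = _ := by ring
  have hsum2 : ∑ k ∈ Finset.range n, |d k - d 0| ≤ (n : ℝ) * (n - 1) / 2 * A := by
    have h6 : ∀ k ∈ Finset.range n, |d k - d 0| ≤ (k : ℝ) * A := by
      intro k hk
      exact key k (by simp only [Finset.mem_range] at hk; omega)
    calc ∑ k ∈ Finset.range n, |d k - d 0| ≤ ∑ k ∈ Finset.range n, (k : ℝ) * A :=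
          Finset.sum_le_sum h6
      _ = (∑ k ∈ Finset.range n, (k : ℝ)) * A := by rw [Finset.sum_mul]
      _ = (n : ℝ) * (n - 1) / 2 * A := by
          have h8 := congrArg (Nat.cast (R := ℝ)) (Finset.sum_range_id_mul_two n)
          push_cast [Nat.cast_sub (by omega : 1 ≤ n)] at h8
          have h7 : (∑ k ∈ Finset.range n, (k : ℝ)) = (n : ℝ) * ((n : ℝ) - 1) / 2 := by
            linarith
          rw [h7]
  have hd0 : w 1 - w 0 = d 0 := by simp [hd]
  rw [hd0]
  have hnR : (n : ℝ) = (r : ℝ) := by exact_mod_cast congrArg (Int.cast : ℤ → ℝ) hnr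
  have hmain : (n : ℝ) * |d 0| ≤ (n : ℝ) * ((n:ℝ) - 1) / 2 * A + 2 * B := by linarith
  rw [hnR] at hmain
  have hfin : (r:ℝ) * |d 0| ≤ (r:ℝ) * ((r:ℝ)/2 * A + 4/(r:ℝ) * B) := by
    have heq : (r:ℝ) * ((r:ℝ)/2 * A + 4/(r:ℝ) * B) = (r:ℝ)^2/2 * A + 4 * B := by
      field_simp
    rw [heq]
    nlinarith [mul_nonneg (le_of_lt hrR) hA0]
  exact (mul_le_mul_iff_right₀ hrR).mp hfin
end

section
/- Let d ≥ 1, v : ℝ^d → ℝ, l ∈ ℝ^d, h > 0, x ∈ ℝ^d, and let r ≥ 2 be an integer. Then |δ_{h,l}v(x)| ≤ (rh/2) · max{ |Δ_{h,l}v(x + i h l)| : |i| ≤ r } + (4/(rh)) · max{ |v(x + i h l)| : |i| ≤ r }. -/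
noncomputable section

/-- The interpolation inequality along a direction `l` used in the proofs of
Lemma 5.5 and Section 6 of Krylov, "An ersatz existence theorem for fully
nonlinear parabolic equations without convexity assumptions".  The maxima over
`|i| ≤ r` are expressed through arbitrary upper bounds `A` and `B`. -/
theorem interpolation_along_direction
    (d : ℕ) (hd : 1 ≤ d) (v : (Fin d → ℝ) → ℝ) (l : Fin d → ℝ)
    (h : ℝ) (hh : 0 < h) (x : Fin d → ℝ) (r : ℤ) (hr : 2 ≤ r) (A B : ℝ)
    (hA : ∀ i : ℤ, |i| ≤ r → |DeltaOp d h l v (x + (i : ℝ) • h • l)| ≤ A)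
    (hB : ∀ i : ℤ, |i| ≤ r → |v (x + (i : ℝ) • h • l)| ≤ B) :
    |deltaOp d h l v x| ≤ (r : ℝ) * h / 2 * A + 4 / ((r : ℝ) * h) * B := by
  have hApos : 0 ≤ A := le_trans (abs_nonneg _) (hA 0 (by simp; omega))
  have hBpos : 0 ≤ B := le_trans (abs_nonneg _) (hB 0 (by simp; omega))
  obtain ⟨n, rfl⟩ : ∃ n : ℕ, r = (n : ℤ) := ⟨r.toNat, by omega⟩
  have hn : 2 ≤ n := by exact_mod_cast hr
  have hnpos : (0:ℝ) < (n:ℝ) := by exact_mod_cast (by omega : 0 < n)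
  set w : ℕ → ℝ := fun i => v (x + (i : ℝ) • h • l) with hw
  set E : ℕ → ℝ := fun k => w (k+2) - 2 * w (k+1) + w k with hE
  -- bound on second differences
  have hA' : ∀ k : ℕ, k + 1 ≤ n → |E k| ≤ h^2 * A := by
    intro k hk
    have h1 := hA ((k:ℤ)+1) (by rw [abs_of_nonneg (by positivity)]; omega)
    have e1 : E k = h^2 * DeltaOp d h l v (x + (((k:ℤ)+1 : ℤ):ℝ) • h • l) := by
      simp only [hE, hw, DeltaOp]
      rw [mul_div_cancel₀ _ (by positivity : (h:ℝ)^2 ≠ 0)]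
      push_cast
      rw [show x + ((k:ℝ)+1) • h • l + h • l = x + ((k:ℝ)+2) • h • l from by module,
          show x + ((k:ℝ)+1) • h • l - h • l = x + (k:ℝ) • h • l from by module]
    rw [e1, abs_mul, abs_of_nonneg (by positivity : (0:ℝ) ≤ h^2)]
    exact mul_le_mul_of_nonneg_left h1 (by positivity)
  -- telescoping identity for first differences
  have gsum : ∀ m : ℕ, w (m+1) - w m = (w 1 - w 0) + ∑ k ∈ Finset.range m, E k := by
    intro m
    induction m with
    | zero => simp
    | succ m ih =>
      rw [Finset.sum_range_succ, ← add_assoc, ← ih]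
      simp only [hE]
      ring
  have tel : ∑ m ∈ Finset.range n, (w (m+1) - w m) = w n - w 0 :=
    Finset.sum_range_sub w n
  set S : ℝ := ∑ m ∈ Finset.range n, ∑ k ∈ Finset.range m, E k with hS
  have main : w n - w 0 = (n:ℝ) * (w 1 - w 0) + S := by
    rw [← tel]
    calc ∑ m ∈ Finset.range n, (w (m+1) - w m)
        = ∑ m ∈ Finset.range n, ((w 1 - w 0) + ∑ k ∈ Finset.range m, E k) := by
          exact Finset.sum_congr rfl fun m _ => gsum m
      _ = (n:ℝ) * (w 1 - w 0) + S := by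
          rw [Finset.sum_add_distrib, Finset.sum_const, Finset.card_range,
            nsmul_eq_mul, hS]
  -- bound on S
  have hSbound : |S| ≤ ((n:ℝ) * ((n:ℝ) - 1) / 2) * (h^2 * A) := by
    have gauss : (∑ m ∈ Finset.range n, (m:ℝ)) * 2 = (n:ℝ) * ((n:ℝ) - 1) := by
      have h2 := congrArg (Nat.cast : ℕ → ℝ) (Finset.sum_range_id_mul_two n)
      push_cast [Nat.cast_sub (by omega : 1 ≤ n)] at h2
      linarith
    calc |S| ≤ ∑ m ∈ Finset.range n, |∑ k ∈ Finset.range m, E k| :=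
          Finset.abs_sum_le_sum_abs _ _
      _ ≤ ∑ m ∈ Finset.range n, ∑ k ∈ Finset.range m, |E k| :=
          Finset.sum_le_sum fun m _ => Finset.abs_sum_le_sum_abs _ _
      _ ≤ ∑ m ∈ Finset.range n, ∑ _k ∈ Finset.range m, (h^2 * A) := by
          refine Finset.sum_le_sum fun m hm => Finset.sum_le_sum fun k hk => ?_
          refine hA' k ?_
          have := Finset.mem_range.mp hm
          have := Finset.mem_range.mp hk
          omega
      _ = (∑ m ∈ Finset.range n, (m:ℝ)) * (h^2 * A) := by
          simp [Finset.sum_const, mul_comm, Finset.sum_mul]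
      _ ≤ ((n:ℝ) * ((n:ℝ) - 1) / 2) * (h^2 * A) := by
          rw [← gauss]; ring_nf
          exact le_rfl
  -- solve for the first difference
  have hwn : |w n| ≤ B := hB n (le_of_eq (Int.abs_natCast n))
  have hw0 : |w 0| ≤ B := hB 0 (by simp)
  have hD : |w 1 - w 0| * (n:ℝ) ≤ 2 * B + ((n:ℝ) * ((n:ℝ) - 1) / 2) * (h^2 * A) := by
    have : (n:ℝ) * (w 1 - w 0) = (w n - w 0) - S := by linarith [main]
    calc |w 1 - w 0| * (n:ℝ) = |(n:ℝ) * (w 1 - w 0)| := by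
          rw [abs_mul, abs_of_nonneg hnpos.le]; ring
      _ = |(w n - w 0) - S| := by rw [this]
      _ ≤ |w n| + |w 0| + |S| := by
          calc |(w n - w 0) - S| ≤ |w n - w 0| + |S| := abs_sub _ _
            _ ≤ |w n| + |w 0| + |S| := by
                have := abs_sub (w n) (w 0); linarith
      _ ≤ 2 * B + ((n:ℝ) * ((n:ℝ) - 1) / 2) * (h^2 * A) := by linarith
  have hδ : deltaOp d h l v x = (w 1 - w 0) / h := by
    simp [deltaOp, hw]
  rw [hδ, abs_div, abs_of_pos hh]
  push_cast
  have hnh : (0:ℝ) < (n:ℝ) * h := mul_pos hnpos hh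
  have step1 : |w 1 - w 0| / h ≤ (2*B + ((n:ℝ)*((n:ℝ)-1)/2)*(h^2*A)) / ((n:ℝ)*h) := by
    rw [div_le_div_iff₀ hh hnh]
    calc |w 1 - w 0| * ((n:ℝ)*h) = (|w 1 - w 0| * (n:ℝ)) * h := by ring
      _ ≤ (2*B + ((n:ℝ)*((n:ℝ)-1)/2)*(h^2*A)) * h :=
          mul_le_mul_of_nonneg_right hD hh.le
  refine step1.trans ?_
  rw [div_le_iff₀ hnh]
  have expand : ((n:ℝ)*h/2*A + 4/((n:ℝ)*h)*B) * ((n:ℝ)*h) = (n:ℝ)^2*h^2/2*A + 4*B := by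
    field_simp
  rw [expand]
  nlinarith [mul_nonneg (mul_nonneg hnpos.le (sq_nonneg h)) hApos, hBpos]
end
end
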